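/- Let $X$ be a Banach space, $\Omega$ a nonempty closed convex subset of $X$, and $\gamma \in (0,1)$. Then for any $x \notin \Omega$ there exists $z \in \Omega$ such that $\gamma\|x - z\| < d(x - z, T(\Omega, z))$, where $T(\Omega,z)$ is the contingent cone of $\Omega$ at $z$ and $d(u,C) := \inf_{c \in C}\|u - c\|$. -/

import Mathlib

open Set Metric Filter Topology Pointwise

noncomputable section

/-- Contingent cone of a convex set: closure of ⋃_{t>0} (A - a)/t. -/
def contCone {X : Type*} [NormedAddCommGroup X] [NormedSpace ℝ X] (A : Set X) (a : X) : Set X :=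
  closure {v : X | ∃ t : ℝ, 0 < t ∧ a + t • v ∈ A}

/-- A weak form of Ekeland's variational principle. -/
theorem ekeland_weak {X : Type*} [NormedAddCommGroup X] [CompleteSpace X]
    (Ω : Set X) (hne : Ω.Nonempty) (hcl : IsClosed Ω)
    (f : X → ℝ) (hf : Continuous f) (hf0 : ∀ y ∈ Ω, 0 ≤ f y)
    (σ : ℝ) (hσ : 0 < σ) :
    ∃ z ∈ Ω, ∀ y ∈ Ω, f z ≤ f y + σ * ‖y - z‖ := by
  classical
  set S : X → Set X := fun u => {y | y ∈ Ω ∧ f y + σ * ‖y - u‖ ≤ f u} with hS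
  have hself : ∀ u ∈ Ω, u ∈ S u := by
    intro u hu
    refine ⟨hu, ?_⟩
    simp
  have hSsub : ∀ u, S u ⊆ Ω := fun u y hy => hy.1
  have hSclosed : ∀ u, IsClosed (S u) := by
    intro u
    have : S u = Ω ∩ {y | f y + σ * ‖y - u‖ ≤ f u} := rfl
    rw [this]
    exact hcl.inter (isClosed_le (by continuity) continuous_const)
  have hnest : ∀ u v, v ∈ S u → S v ⊆ S u := by
    intro u v hv y hy
    refine ⟨hy.1, ?_⟩
    have h1 : f y + σ * ‖y - v‖ ≤ f v := hy.2
    have h2 : f v + σ * ‖v - u‖ ≤ f u := hv.2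
    have htri : ‖y - u‖ ≤ ‖y - v‖ + ‖v - u‖ := norm_sub_le_norm_sub_add_norm_sub y v u
    nlinarith [hσ.le]
  have hbdd : ∀ u, BddBelow (f '' S u) := by
    rintro u
    exact ⟨0, fun a ⟨y, hy, h⟩ => h ▸ hf0 y hy.1⟩
  have key : ∀ (n : ℕ), ∀ u ∈ Ω, ∃ y ∈ S u, f y < sInf (f '' S u) + (1/2 : ℝ)^n := by
    intro n u hu
    have hne' : (f '' S u).Nonempty := ⟨f u, u, hself u hu, rfl⟩
    obtain ⟨a, ⟨y, hy, rfl⟩, ha⟩ := Real.lt_sInf_add_pos hne' (pow_pos (by norm_num : (0:ℝ) < 1/2) n)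
    exact ⟨y, hy, ha⟩
  -- define the sequence
  let F : ℕ → X → X := fun n u => if h : u ∈ Ω then (key n u h).choose else u
  let z : ℕ → X := fun n => Nat.rec hne.some (fun n u => F n u) n
  have hzsucc : ∀ n, z (n+1) = F n (z n) := fun n => rfl
  have hmem : ∀ n, z n ∈ Ω := by
    intro n
    induction n with
    | zero => exact hne.some_mem
    | succ n ih =>
      rw [hzsucc]
      simp only [F, dif_pos ih]
      exact hSsub _ (key n (z n) ih).choose_spec.1
  have hstep : ∀ n, z (n+1) ∈ S (z n) ∧ f (z (n+1)) < sInf (f '' S (z n)) + (1/2:ℝ)^n := by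
    intro n
    have hm := hmem n
    have := (key n (z n) hm).choose_spec
    rw [hzsucc]
    simp only [F, dif_pos hm]
    exact this
  set a : ℕ → ℝ := fun n => f (z n) with ha
  have hdec : ∀ n, a (n+1) + σ * ‖z (n+1) - z n‖ ≤ a n := fun n => (hstep n).1.2
  have hnorm_nonneg : ∀ n, (0:ℝ) ≤ σ * ‖z (n+1) - z n‖ :=
    fun n => mul_nonneg hσ.le (norm_nonneg _)
  have hanti : ∀ n m, n ≤ m → a m ≤ a n := by
    intro n m h
    induction m with
    | zero => simp_all
    | succ m ih =>
      rcases Nat.lt_or_ge n (m+1) with h' | h'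
      · have h1 := ih (Nat.lt_succ_iff.mp h')
        have h2 := hdec m
        have h3 := hnorm_nonneg m
        linarith
      · have : n = m + 1 := le_antisymm h h'
        simp [this]
  have hpos : ∀ n, 0 ≤ a n := fun n => hf0 _ (hmem n)
  have hbdda : BddBelow (Set.range a) := ⟨0, fun r ⟨n, hn⟩ => hn ▸ hpos n⟩
  set L : ℝ := ⨅ n, a n with hL
  have hLle : ∀ n, L ≤ a n := fun n => ciInf_le hbdda n
  have htendL : Tendsto a atTop (𝓝 L) :=
    tendsto_atTop_ciInf (fun n m h => hanti n m h) hbdda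
  have hdist : ∀ n m, n ≤ m → σ * ‖z m - z n‖ ≤ a n - a m := by
    intro n m h
    induction m with
    | zero =>
      have : n = 0 := Nat.le_zero.mp h
      simp [this]
    | succ m ih =>
      rcases Nat.lt_or_ge n (m+1) with h' | h'
      · have ih' := ih (Nat.lt_succ_iff.mp h')
        have htri : ‖z (m+1) - z n‖ ≤ ‖z (m+1) - z m‖ + ‖z m - z n‖ :=
          norm_sub_le_norm_sub_add_norm_sub _ _ _
        have h2 := hdec m
        nlinarith [hσ.le]
      · have : n = m + 1 := le_antisymm h h'
        simp [this]
  have hcauchy : CauchySeq z := by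
    apply cauchySeq_of_le_tendsto_0 (fun N => (a N - L) / σ)
    · intro n m N hn hm
      rcases le_total n m with h | h
      · have h0 := hdist n m h
        rw [dist_eq_norm, norm_sub_rev]
        have h2 : L ≤ a m := hLle m
        have h3 : a n ≤ a N := hanti N n hn
        rw [le_div_iff₀ hσ]
        nlinarith
      · have h0 := hdist m n h
        rw [dist_eq_norm]
        have h2 : L ≤ a n := hLle n
        have h3 : a m ≤ a N := hanti N m hm
        rw [le_div_iff₀ hσ]
        nlinarith
    · have : Tendsto (fun N => (a N - L) / σ) atTop (𝓝 ((L - L)/σ)) :=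
        ((htendL.sub tendsto_const_nhds).div_const σ)
      simpa using this
  obtain ⟨w, hwlim⟩ := cauchySeq_tendsto_of_complete hcauchy
  have hwΩ : w ∈ Ω := hcl.mem_of_tendsto hwlim (Eventually.of_forall hmem)
  have hSmono : ∀ n m, n ≤ m → S (z m) ⊆ S (z n) := by
    intro n m h
    induction m with
    | zero =>
      have : n = 0 := Nat.le_zero.mp h
      simp [this]
    | succ m ih =>
      rcases Nat.lt_or_ge n (m+1) with h' | h'
      · exact (hnest (z m) (z (m+1)) (hstep m).1).trans (ih (Nat.lt_succ_iff.mp h'))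
      · have : n = m + 1 := le_antisymm h h'
        simp [this]
  have hwS : ∀ n, w ∈ S (z n) := by
    intro n
    apply (hSclosed (z n)).mem_of_tendsto hwlim
    filter_upwards [eventually_ge_atTop n] with m hm
    exact hSmono n m hm (hself (z m) (hmem m))
  refine ⟨w, hwΩ, ?_⟩
  intro y hy
  by_contra hcon
  push_neg at hcon
  have hyS : ∀ n, y ∈ S (z n) := by
    intro n
    refine ⟨hy, ?_⟩
    have h1 := (hwS n).2
    have htri : ‖y - z n‖ ≤ ‖y - w‖ + ‖w - z n‖ := norm_sub_le_norm_sub_add_norm_sub _ _ _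
    nlinarith [hσ.le]
  have hlim : ∀ n, f w ≤ f y + (1/2:ℝ)^n := by
    intro n
    have h1 : sInf (f '' S (z n)) ≤ f y := csInf_le (hbdd _) ⟨y, hyS n, rfl⟩
    have h2 := (hstep n).2
    have h3 : f w ≤ f (z (n+1)) := by
      have := (hwS (n+1)).2
      nlinarith [mul_nonneg hσ.le (norm_nonneg (w - z (n+1)))]
    linarith
  have hfwy : f w ≤ f y := by
    have ht : Tendsto (fun n : ℕ => f y + (1/2:ℝ)^n) atTop (𝓝 (f y)) := by
      have := tendsto_pow_atTop_nhds_zero_of_lt_one (by norm_num : (0:ℝ) ≤ 1/2)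
        (by norm_num : (1/2:ℝ) < 1)
      simpa using (tendsto_const_nhds (x := f y)).add this
    exact ge_of_tendsto ht (Eventually.of_forall hlim)
  nlinarith [mul_nonneg hσ.le (norm_nonneg (y - w))]

theorem stmt3 {X : Type*} [NormedAddCommGroup X] [NormedSpace ℝ X] [CompleteSpace X]
    (Ω : Set X) (hne : Ω.Nonempty) (hcl : IsClosed Ω) (hcv : Convex ℝ Ω)
    (γ : ℝ) (hγ : γ ∈ Set.Ioo (0 : ℝ) 1) (x : X) (hx : x ∉ Ω) :
    ∃ z ∈ Ω, γ * ‖x - z‖ < infDist (x - z) (contCone Ω z) := by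
  obtain ⟨hγ0, hγ1⟩ := hγ
  set σ : ℝ := (1 - γ) / (2 * (1 + γ)) with hσdef
  have hσ : 0 < σ := div_pos (by linarith) (by linarith)
  have h1σ : (0:ℝ) < 1 + σ := by linarith
  have hkey : σ * (2 * (1 + γ)) = 1 - γ := by
    rw [hσdef]; field_simp
  obtain ⟨z, hzΩ, hek⟩ := ekeland_weak Ω hne hcl (fun y => ‖x - y‖)
    (by continuity) (fun y _ => norm_nonneg _) σ hσ
  refine ⟨z, hzΩ, ?_⟩
  set d : ℝ := ‖x - z‖ with hd
  have hd0 : 0 < d := by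
    rw [hd, norm_pos_iff, sub_ne_zero]
    rintro rfl; exact hx hzΩ
  set c : ℝ := (1 - σ) / (1 + σ) * d with hc
  have hceq : c * (1 + σ) = (1 - σ) * d := by
    rw [hc]; field_simp
  have hγc : γ * d < c := by
    have hγlt : γ * (1 + σ) < 1 - σ := by nlinarith
    nlinarith
  set K : Set X := {v : X | ∃ t : ℝ, 0 < t ∧ z + t • v ∈ Ω} with hK
  have hKne : K.Nonempty := ⟨0, 1, one_pos, by simpa using hzΩ⟩
  have hbound : ∀ w ∈ K, c ≤ dist (x - z) w := by
    rintro w ⟨t, ht, htw⟩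
    set s : ℝ := min t 1 with hs
    have hs0 : 0 < s := lt_min ht one_pos
    have hs1 : s ≤ 1 := min_le_right _ _
    have hst : s ≤ t := min_le_left _ _
    have hmemΩ : z + s • w ∈ Ω := by
      have hcomb := hcv hzΩ htw (a := 1 - s/t) (b := s/t)
        (by rw [sub_nonneg, div_le_one ht]; exact hst)
        (div_nonneg hs0.le ht.le) (by ring)
      have heq : (1 - s/t) • z + (s/t) • (z + t • w) = z + s • w := by
        rw [smul_add, smul_smul, div_mul_cancel₀ s ht.ne', sub_smul, one_smul]
        abel
      rwa [heq] at hcomb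
    set E : ℝ := ‖(x - z) - w‖ with hE
    have hek' : d ≤ ‖(x - z) - s • w‖ + σ * (s * ‖w‖) := by
      have := hek (z + s • w) hmemΩ
      have h1 : x - (z + s • w) = (x - z) - s • w := by abel
      have h2 : (z + s • w) - z = s • w := by abel
      rw [h1, h2, norm_smul, Real.norm_of_nonneg hs0.le] at this
      exact this
    have hconv : ‖(x - z) - s • w‖ ≤ (1 - s) * d + s * E := by
      have heq2 : (x - z) - s • w = (1 - s) • (x - z) + s • ((x - z) - w) := by
        module
      rw [heq2]
      refine (norm_add_le _ _).trans ?_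
      rw [norm_smul, norm_smul, Real.norm_of_nonneg (by linarith), Real.norm_of_nonneg hs0.le]
    have h2 : d ≤ E + σ * ‖w‖ := by
      have hs' : s * d ≤ s * (E + σ * ‖w‖) := by nlinarith
      exact (mul_le_mul_iff_right₀ hs0).mp hs'
    have h3 : ‖w‖ - d ≤ E := by
      have hww : ‖w‖ ≤ d + E := by
        calc ‖w‖ = ‖(x - z) - ((x - z) - w)‖ := by rw [sub_sub_cancel]
        _ ≤ ‖x - z‖ + ‖(x - z) - w‖ := norm_sub_le _ _
      linarith
    rw [dist_eq_norm]
    rcases le_or_gt (‖w‖) (2 * d / (1 + σ)) with hw | hw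
    · have hw' : ‖w‖ * (1 + σ) ≤ 2 * d := by
        rwa [le_div_iff₀ h1σ] at hw
      nlinarith [hσ.le]
    · have hw' : 2 * d < ‖w‖ * (1 + σ) := by
        rwa [div_lt_iff₀ h1σ] at hw
      nlinarith [hσ.le]
  have hgoal : c ≤ infDist (x - z) K := by
    by_contra hlt
    push_neg at hlt
    obtain ⟨y, hyK, hy⟩ := (infDist_lt_iff hKne).mp hlt
    exact absurd (hbound y hyK) (not_le.mpr hy)
  calc γ * d < c := hγc
  _ ≤ infDist (x - z) K := hgoal
  _ = infDist (x - z) (contCone Ω z) := by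
    rw [contCone, infDist_closure]
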